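/- arXiv:2102.06947 — 6 statements merged into one kernel-verified Lean document; each statement's English description precedes it below -/
import Mathlib

section
/- Let r₀ = 4/27 and for r < r₀ define σ₀(r) as the root of σ³ - σ² + r = 0 given by σ₀(r) = (1/3)(1 + C₋(r) + C₊(r)) with C_±(r) = (3/2)(-4r + 2r₀ ± 4√(r(r - r₀)))^{1/3}. Then σ₀ is strictly decreasing on (-∞, r₀), with σ₀(0) = 1 and σ₀(r₀) = 2/3. -/
open Set

/-- The branch `σ₀` of the real cubic `σ³ - σ² + r = 0` with `σ₀(0) = 1` (the one given
explicitly by the Cardano formula with `C_±`) is strictly decreasing on `(-∞, r₀]`,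
`r₀ = 4/27`, with `σ₀(0) = 1` and `σ₀(r₀) = 2/3`. -/
theorem stmt5 (σ : ℝ → ℝ)
    (hroot : ∀ r ≤ (4 / 27 : ℝ), (σ r) ^ 3 - (σ r) ^ 2 + r = 0)
    (hcont : ContinuousOn σ (Iic (4 / 27 : ℝ)))
    (h0 : σ 0 = 1) :
    StrictAntiOn σ (Iio (4 / 27 : ℝ)) ∧ StrictAntiOn σ (Iic (4 / 27 : ℝ)) ∧
      σ 0 = 1 ∧ σ (4 / 27) = 2 / 3 := by
  -- Step 1: σ r > 2/3 for all r < 4/27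
  have key : ∀ r < (4 / 27 : ℝ), 2 / 3 < σ r := by
    intro r hr
    by_contra hle
    push_neg at hle
    have hsub : uIcc r (0 : ℝ) ⊆ Iic (4 / 27 : ℝ) := by
      intro x hx
      rcases hx with ⟨_, hx2⟩
      have : x ≤ max r 0 := by simpa [uIcc] using hx2
      have : max r 0 < 4 / 27 := by
        apply max_lt hr; norm_num
      simp only [mem_Iic]
      linarith [le_trans ‹x ≤ max r 0› (le_of_lt this)]
    have hc : ContinuousOn σ (uIcc r 0) := hcont.mono hsub
    have hmem : (2 / 3 : ℝ) ∈ uIcc (σ r) (σ 0) := by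
      rw [h0]
      constructor
      · simpa using inf_le_of_left_le hle
      · apply le_sup_of_le_right; norm_num
    obtain ⟨t, ht, hσt⟩ := intermediate_value_uIcc hc hmem
    have htle : t ≤ 4 / 27 := hsub ht
    have := hroot t htle
    rw [hσt] at this
    have ht427 : t = 4 / 27 := by nlinarith
    have : max r 0 < 4 / 27 := by apply max_lt hr; norm_num
    have : t ≤ max r 0 := by simpa [uIcc] using ht.2
    linarith
  -- Step 2: σ (4/27) = 2/3
  have hend : σ (4 / 27) = 2 / 3 := by
    have hroot' := hroot (4 / 27) le_rfl
    have hge : (2 / 3 : ℝ) ≤ σ (4 / 27) := by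
      have htend : Filter.Tendsto σ (nhdsWithin (4 / 27) (Iio (4 / 27 : ℝ)))
          (nhds (σ (4 / 27))) := by
        have h1 : Filter.Tendsto σ (nhdsWithin (4 / 27) (Iic (4 / 27 : ℝ)))
            (nhds (σ (4 / 27))) :=
          (hcont (4 / 27) (by simp)).tendsto
        exact h1.mono_left (nhdsWithin_mono _ Iio_subset_Iic_self)
      refine ge_of_tendsto htend ?_
      filter_upwards [self_mem_nhdsWithin] with x hx
      exact le_of_lt (key x hx)
    -- cubic at 4/27 factors as (x - 2/3)^2 (x + 1/3)
    set x := σ (4 / 27) with hx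
    have hfac : (x - 2 / 3) ^ 2 * (x + 1 / 3) = 0 := by nlinarith
    rcases mul_eq_zero.mp hfac with h | h
    · have : x - 2 / 3 = 0 := by
        have := sq_eq_zero_iff.mp h; exact this
      linarith
    · linarith
  -- Step 3: strict antitonicity on Iic
  have anti : StrictAntiOn σ (Iic (4 / 27 : ℝ)) := by
    intro r hr s hs hrs
    simp only [mem_Iic] at hr hs
    have ha : 2 / 3 < σ r := key r (lt_of_lt_of_le hrs hs)
    have hb : 2 / 3 ≤ σ s := by
      rcases eq_or_lt_of_le hs with h | h
      · rw [h, hend]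
      · exact le_of_lt (key s h)
    have er := hroot r hr
    have es := hroot s hs
    by_contra hcon
    push_neg at hcon
    -- hcon : σ r ≤ σ s
    nlinarith [sq_nonneg (σ r - σ s), sq_nonneg (σ r + σ s - 2 / 3),
      mul_nonneg (sub_nonneg.mpr hcon) (by linarith : (0:ℝ) ≤ σ r),
      mul_nonneg (sub_nonneg.mpr hcon) (by linarith : (0:ℝ) ≤ σ s)]
  exact ⟨anti.mono Iio_subset_Iic_self, anti, h0, hend⟩
end

section
/- Let r₀ = 4/27 and σ₀ : (-∞, r₀) → ℝ the strictly decreasing root of σ³ - σ² + r = 0 with σ₀(0) = 1. For ε > 0 and any real v with εℓv/2 < r₀ and v ≠ 0, define C(v) = -ε⁻¹(σ₀(εℓv/2) - 1)(3σ₀(εℓv/2) - 1). Then C(v)·v > 0. -/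
open Set

/-- Positivity of the nonlinear Cummins operator: with `σ₀` the strictly decreasing root
of `σ³ - σ² + r = 0`, `σ₀(0) = 1`, `σ₀(r₀) = 2/3`, `r₀ = 4/27`, and
`C(v) = -ε⁻¹(σ₀(εℓv/2) - 1)(3σ₀(εℓv/2) - 1)`, one has `C(v)·v > 0` for `v ≠ 0`,
`εℓv/2 < r₀`. -/
theorem stmt6 (σ : ℝ → ℝ) (r₀ : ℝ) (hr₀ : r₀ = 4 / 27)
    (hroot : ∀ r ≤ r₀, (σ r) ^ 3 - (σ r) ^ 2 + r = 0)
    (hanti : StrictAntiOn σ (Iic r₀))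
    (h0 : σ 0 = 1) (hr0 : σ r₀ = 2 / 3)
    (ε ℓ v : ℝ) (hε : 0 < ε) (hℓ : 0 < ℓ) (hv : v ≠ 0)
    (hlt : ε * ℓ * v / 2 < r₀) :
    0 < -(ε⁻¹ * (σ (ε * ℓ * v / 2) - 1) * (3 * σ (ε * ℓ * v / 2) - 1)) * v := by
  set r := ε * ℓ * v / 2 with hr
  have hεinv : (0:ℝ) < ε⁻¹ := inv_pos.mpr hε
  have hrmem : r ∈ Iic r₀ := le_of_lt hlt
  have hr0mem : r₀ ∈ Iic r₀ := mem_Iic.mpr le_rfl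
  have h0mem : (0:ℝ) ∈ Iic r₀ := by rw [hr₀]; norm_num
  rcases hv.lt_or_gt with hneg | hpos
  · -- v < 0, so r < 0, σ r > 1
    have hrneg : r < 0 := by
      have : ε * ℓ * v < 0 := mul_neg_of_pos_of_neg (mul_pos hε hℓ) hneg
      rw [hr]; linarith
    have h1 : 1 < σ r := by
      have := hanti hrmem h0mem hrneg
      rwa [h0] at this
    have hp : 0 < (σ r - 1) * (3 * σ r - 1) := by nlinarith
    have := mul_pos (mul_pos hεinv hp) (neg_pos.mpr hneg)
    nlinarith
  · -- v > 0, r ∈ (0, r₀)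
    have hrpos : 0 < r := by positivity
    have h1 : σ r < 1 := by
      have := hanti h0mem hrmem hrpos
      rwa [h0] at this
    have h2 : 2/3 < σ r := by
      have := hanti hrmem hr0mem hlt
      rwa [hr0] at this
    have hp : 0 < (1 - σ r) * (3 * σ r - 1) := by nlinarith
    have := mul_pos (mul_pos hεinv hp) hpos
    nlinarith
end

section
/- Let τ > 0, ℓ > 0, κ > 0 with τ² > κ² + ℓ²/3. Then the function P(s) = τ²s² + sℓ√(1 + κ²s²) + 1, defined on ℂ with Re s > 0 using the principal square root (positive real part), has no zeros with nonnegative real part; in particular P has no purely imaginary zeros and no zeros on [0,∞). -/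
/-- The denominator `P(s) = τ²s² + sℓ√(1+κ²s²) + 1` of the dispersive Cummins transfer
function, with the square root branch of nonnegative real part, has no zeros with
nonnegative real part (in particular none on the imaginary axis nor on `[0,∞)`),
provided `τ² > κ² + ℓ²/3`. -/
theorem stmt7 (τ ℓ κ : ℝ) (hτ : 0 < τ) (hℓ : 0 < ℓ) (hκ : 0 < κ)
    (h : κ ^ 2 + ℓ ^ 2 / 3 < τ ^ 2)
    (r : ℂ → ℂ)
    (hr_sq : ∀ s : ℂ, (r s) ^ 2 = 1 + (κ : ℂ) ^ 2 * s ^ 2)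
    (hr_re : ∀ s : ℂ, 0 ≤ (r s).re) :
    ∀ s : ℂ, 0 ≤ s.re → (τ : ℂ) ^ 2 * s ^ 2 + s * (ℓ : ℂ) * r s + 1 ≠ 0 := by
  intro s hs hP
  obtain ⟨e1, e2⟩ := Complex.ext_iff.mp (hr_sq s)
  obtain ⟨e3, e4⟩ := Complex.ext_iff.mp hP
  have ha := hr_re s
  simp only [Complex.add_re, Complex.add_im, Complex.mul_re, Complex.mul_im,
    Complex.one_re, Complex.one_im, Complex.zero_re, Complex.zero_im,
    Complex.ofReal_re, Complex.ofReal_im, pow_two] at e1 e2 e3 e4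
  generalize hA : (r s).re = a at e1 e2 e3 e4 ha
  generalize hB : (r s).im = b at e1 e2 e3 e4
  generalize hE : s.re = η at e1 e2 e3 e4 hs
  generalize hW : s.im = ω at e1 e2 e3 e4
  clear hA hB hE hW hP hr_sq hr_re
  have E1 : a ^ 2 - b ^ 2 = 1 + κ ^ 2 * (η ^ 2 - ω ^ 2) := by linear_combination e1
  have E2 : a * b = κ ^ 2 * η * ω := by linear_combination e2 / 2
  have E3 : τ ^ 2 * (η ^ 2 - ω ^ 2) + ℓ * (η * a - ω * b) + 1 = 0 := by linear_combination e3
  have E4 : 2 * τ ^ 2 * η * ω + ℓ * (η * b + ω * a) = 0 := by linear_combination e4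
  clear e1 e2 e3 e4
  rcases eq_or_ne ω 0 with hω0 | hωne
  · -- ω = 0 : real axis, P.re ≥ 1 > 0
    subst hω0
    nlinarith [sq_nonneg (τ * η), mul_nonneg (mul_nonneg hℓ.le hs) ha]
  · rcases eq_or_lt_of_le hs with hη0 | hηpos
    · -- η = 0, ω ≠ 0 : imaginary axis
      subst hη0
      -- from E4 : ℓ * ω * a = 0 hence a = 0
      have ha0 : a = 0 := by
        have h1 : ℓ * (ω * a) = 0 := by linarith [E4]
        have h2 := (mul_eq_zero.mp h1).resolve_left (ne_of_gt hℓ)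
        exact (mul_eq_zero.mp h2).resolve_left hωne
      have hb2 : b ^ 2 = κ ^ 2 * ω ^ 2 - 1 := by
        have := E1; rw [ha0] at this; nlinarith [this]
      have he3 : 1 - τ ^ 2 * ω ^ 2 = ℓ * ω * b := by
        have := E3; rw [ha0] at this; linarith [this]
      have hωsq : (0:ℝ) < ω ^ 2 := by positivity
      have key : (1 - τ ^ 2 * ω ^ 2) ^ 2 = ℓ ^ 2 * ω ^ 2 * (κ ^ 2 * ω ^ 2 - 1) := by
        rw [he3, ← hb2]; ring
      -- quadratic in X = ω² has negative discriminant
      nlinarith [sq_nonneg (2 * (τ ^ 2 * τ ^ 2 - ℓ ^ 2 * κ ^ 2) * ω ^ 2 + ℓ ^ 2 - 2 * τ ^ 2),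
        sq_nonneg (κ ^ 2 - ℓ ^ 2 / 3), mul_pos hℓ hℓ, mul_pos hκ hκ, mul_pos hτ hτ,
        mul_pos hωsq hωsq, sq_nonneg (κ * ℓ)]
    · -- η > 0, ω ≠ 0 : Im P ≠ 0
      have hωsq : (0:ℝ) < ω ^ 2 := by positivity
      have hapos : 0 < a := by
        rcases eq_or_lt_of_le ha with ha0 | hpos
        · exfalso
          have : κ ^ 2 * η * ω = 0 := by rw [← E2, ← ha0]; ring
          rcases mul_eq_zero.mp this with h' | h'
          · rcases mul_eq_zero.mp h' with h'' | h''
            · exact absurd h'' (by positivity)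
            · exact absurd h'' (ne_of_gt hηpos)
          · exact hωne h'
        · exact hpos
      have hωb : 0 < ω * b := by
        have h1 : a * (ω * b) = κ ^ 2 * η * ω ^ 2 := by linear_combination ω * E2
        have h2 : 0 < κ ^ 2 * η * ω ^ 2 := by positivity
        nlinarith [h1, h2, hapos]
      have h0 : 2 * τ ^ 2 * η * ω ^ 2 + ℓ * η * (ω * b) + ℓ * ω ^ 2 * a = 0 := by
        linear_combination ω * E4
      nlinarith [mul_pos (mul_pos hτ hτ) (mul_pos hηpos hωsq),
        mul_pos (mul_pos hℓ hηpos) hωb, mul_pos (mul_pos hℓ hωsq) hapos, h0]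
end

section
/- Let κ > 0 and K̂(p) = 1/√(1 + κ²p²) (principal square root) for p in the open right half-plane ℂ₀ = {Re p > 0}. Then Re(p K̂(p)) ≥ 0 for all p ∈ ℂ₀; moreover, for every a > 0 there exists c_a > 0 such that Re(p K̂(p)) ≥ c_a for all p with Re p > a. -/
lemma real_key (κ α ξ u v : ℝ) (hκ : 0 < κ) (hα : 0 < α) (hu : 0 < u)
    (h1 : u^2 - v^2 = 1 + κ^2*(α^2 - ξ^2)) (h2 : u*v = κ^2*(α*ξ)) :
    α / (6*(1+κ*α)) ≤ (α*u + ξ*v)/(u^2+v^2) := by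
  have hv2 : v^2 = u^2 - (1 + κ^2*α^2 - κ^2*ξ^2) := by nlinarith [h1]
  have huv : u^2*(u^2 - (1 + κ^2*α^2 - κ^2*ξ^2)) = κ^4*α^2*ξ^2 := by
    have h2' : (u*v)^2 = (κ^2*(α*ξ))^2 := by rw [h2]
    nlinarith [h2', hv2]
  have h5 : 0 ≤ (3*(1+κ*α))^4 - (1 + κ^2*α^2 - κ^2*ξ^2)*(3*(1+κ*α))^2 - κ^4*α^2*ξ^2 := by
    have hk1 : κ^4*α^2*ξ^2 ≤ κ^2*ξ^2*(1+κ*α)^2 := by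
      nlinarith [sq_nonneg (κ*ξ), mul_pos hκ hα]
    have hk2 : 0 ≤ 9*(1+κ*α)^2 * ((1+κ*α)^2 - (1+κ^2*α^2)) := by
      apply mul_nonneg (by positivity)
      nlinarith [mul_pos hκ hα]
    nlinarith [hk1, hk2, sq_nonneg (1+κ*α), sq_nonneg ((1+κ*α)^2), sq_nonneg (κ*ξ*(1+κ*α))]
  have hprod : 0 ≤ ((3*(1+κ*α))^2 - u^2)*((3*(1+κ*α))^2 + v^2) := by
    nlinarith [h5, hv2, huv]
  have hBv : (0:ℝ) < (3*(1+κ*α))^2 + v^2 := by positivity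
  have hu2B : u^2 ≤ (3*(1+κ*α))^2 := by nlinarith [hprod, hBv]
  have huB : u ≤ 3*(1+κ*α) := by nlinarith [hu2B, hu, mul_pos hκ hα]
  have hN : 0 < u^2 + v^2 := by positivity
  have hud : u*(α*u + ξ*v) = α*(u^2 + κ^2*ξ^2) := by linear_combination ξ * h2
  have hstep1 : α/(2*u) ≤ (α*u + ξ*v)/(u^2+v^2) := by
    rw [div_le_div_iff₀ (by positivity) hN]
    nlinarith [hud, hv2, mul_nonneg hα.le (show (0:ℝ) ≤ 1+κ^2*α^2+κ^2*ξ^2 by positivity)]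
  have hstep0 : α/(6*(1+κ*α)) ≤ α/(2*u) := by
    apply div_le_div_of_nonneg_left hα.le (by positivity)
    linarith [huB]
  linarith [hstep0, hstep1]

open Complex

lemma cx_key (κ : ℝ) (hκ : 0 < κ) (p : ℂ) (hp : 0 < p.re) :
    p.re / (6*(1+κ*p.re)) ≤ (p * (((1 : ℂ) + (κ : ℂ) ^ 2 * p ^ 2) ^ ((1 : ℂ) / 2))⁻¹).re := by
  set z : ℂ := (1 : ℂ) + (κ : ℂ) ^ 2 * p ^ 2 with hz
  have hzre : z.re = 1 + κ^2*(p.re^2 - p.im^2) := by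
    simp [hz, Complex.add_re, Complex.mul_re, Complex.mul_im, pow_two]
  have hzim : z.im = 2*κ^2*(p.re*p.im) := by
    simp [hz, Complex.add_im, Complex.mul_re, Complex.mul_im, pow_two]; ring
  have hkey : z.im = 0 → 0 < z.re := by
    intro him
    have hh := him
    rw [hzim] at hh
    have hx : (2*κ^2) * (p.re*p.im) = 0 := by linarith
    have him0 : p.im = 0 := by
      rcases mul_eq_zero.mp hx with h | h
      · exact absurd h (by positivity)
      · rcases mul_eq_zero.mp h with h' | h'
        · exact absurd h' hp.ne'
        · exact h'
    rw [hzre, him0]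
    nlinarith [sq_nonneg (κ*p.re)]
  have hznp : z.arg ≠ Real.pi := by
    intro h
    obtain ⟨hre, him⟩ := Complex.arg_eq_pi_iff.mp h
    exact absurd (hkey him) (by linarith)
  have hz0 : z ≠ 0 := by
    intro h
    have h1 : z.im = 0 := by rw [h]; simp
    have h2 : z.re = 0 := by rw [h]; simp
    exact absurd (hkey h1) (by linarith)
  set w : ℂ := z ^ ((1 : ℂ)/2) with hw
  -- w^2 = z
  have hw2 : w^2 = z := by
    rw [hw]
    have : (1 : ℂ)/2 = (((2:ℕ)) : ℂ)⁻¹ := by norm_num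
    rw [this, Complex.cpow_nat_inv_pow z (by norm_num)]
  -- Re w > 0
  have hure : 0 < w.re := by
    have h12 : (1 : ℂ)/2 = (((1/2 : ℝ)) : ℂ) := by norm_num
    rw [hw, h12, Complex.cpow_ofReal_re]
    apply mul_pos
    · exact Real.rpow_pos_of_pos (norm_pos_iff.mpr hz0) _
    · apply Real.cos_pos_of_mem_Ioo
      constructor
      · have := Complex.neg_pi_lt_arg z
        have hpi := Real.pi_pos
        nlinarith
      · have h1 := Complex.arg_le_pi z
        have h2 : z.arg < Real.pi := lt_of_le_of_ne h1 hznp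
        have hpi := Real.pi_pos
        nlinarith
  have hw0 : w ≠ 0 := fun h => by simp [h] at hure
  -- relations
  have hrel1 : w.re^2 - w.im^2 = 1 + κ^2*(p.re^2 - p.im^2) := by
    have := congrArg Complex.re hw2
    rw [pow_two, Complex.mul_re] at this
    rw [hzre] at this
    nlinarith [this]
  have hrel2 : w.re * w.im = κ^2*(p.re*p.im) := by
    have := congrArg Complex.im hw2
    rw [pow_two, Complex.mul_im] at this
    rw [hzim] at this
    nlinarith [this]
  -- compute the real part
  have hre : (p * w⁻¹).re = (p.re * w.re + p.im * w.im)/(w.re^2 + w.im^2) := by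
    have hN' : w.re*w.re + w.im*w.im ≠ 0 := ne_of_gt (by nlinarith [hure, sq_nonneg w.im])
    rw [Complex.mul_re, Complex.inv_re, Complex.inv_im, Complex.normSq_apply]
    field_simp [hN']
    ring
  rw [hre]
  exact real_key κ p.re p.im w.re w.im hκ hp hure hrel1 hrel2

/-- For `K̂(p) = (1+κ²p²)^{-1/2}` (principal square root), `Re(pK̂(p)) ≥ 0` on the right
half-plane, and on each half-plane `Re p > a` with `a > 0` there is a positive lower
bound `c_a`. -/
theorem stmt9 (κ : ℝ) (hκ : 0 < κ) :
    (∀ p : ℂ, 0 < p.re →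
      0 ≤ (p * (((1 : ℂ) + (κ : ℂ) ^ 2 * p ^ 2) ^ ((1 : ℂ) / 2))⁻¹).re) ∧
    ∀ a : ℝ, 0 < a → ∃ c : ℝ, 0 < c ∧ ∀ p : ℂ, a < p.re →
      c ≤ (p * (((1 : ℂ) + (κ : ℂ) ^ 2 * p ^ 2) ^ ((1 : ℂ) / 2))⁻¹).re := by
  constructor
  · intro p hp
    have h := cx_key κ hκ p hp
    have h0 : (0:ℝ) ≤ p.re / (6*(1+κ*p.re)) := by positivity
    linarith
  · intro a ha
    refine ⟨a / (6*(1+κ*a)), by positivity, fun p hp => ?_⟩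
    have hp0 : 0 < p.re := lt_trans ha hp
    have h := cx_key κ hκ p hp0
    have hmono : a / (6*(1+κ*a)) ≤ p.re / (6*(1+κ*p.re)) := by
      rw [div_le_div_iff₀ (by positivity) (by positivity)]
      nlinarith [mul_pos hκ ha, hp.le]
    linarith
end

section
/- Let κ > 0 and s ∈ ℂ with Re s > 0. The ODE system on (ℓ,∞): s ζ̂ + ∂ₓq̂ = 0, (1 - κ²∂ₓ²)s q̂ + ∂ₓζ̂ = 0, with boundary condition q̂(ℓ) = Q₀, has a unique solution that does not grow exponentially at infinity, given by q̂(x) = Q₀ exp(-(s/√(1+κ²s²))(x - ℓ)) and ζ̂(x) = q̂(x)/√(1+κ²s²), where √ denotes the principal square root. -/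
open Set

private lemma hasDerivAt_cexp_real (c : ℂ) (x : ℝ) :
    HasDerivAt (fun y : ℝ => Complex.exp (c * y)) (c * Complex.exp (c * x)) x := by
  have h : HasDerivAt (fun y : ℝ => c * (y : ℂ)) c x := by
    simpa using (Complex.ofRealCLM.hasDerivAt (x := x)).const_mul c
  simpa [mul_comm] using h.cexp

private lemma const_on_Ici {f : ℝ → ℂ} {a : ℝ} (hf : Differentiable ℝ f)
    (h0 : ∀ x ∈ Ici a, deriv f x = 0) : ∀ x ∈ Ici a, f x = f a := by
  intro x hx
  apply (convex_Ici a).is_const_of_fderivWithin_eq_zero hf.differentiableOn _ hx self_mem_Ici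
  intro z hz
  rw [fderivWithin_eq_fderiv (uniqueDiffOn_Ici a z hz) (hf z)]
  have hz' : HasDerivAt f 0 z := h0 z hz ▸ (hf z).hasDerivAt
  rw [hz'.hasFDerivAt.fderiv]
  ext : 1; simp

private lemma re_half_pow_pos {w : ℂ} (hw : w.im = 0 → 0 < w.re) : 0 < (w ^ ((1:ℂ)/2)).re := by
  have hw0 : w ≠ 0 := by
    intro h; simp [h] at hw
  rw [Complex.cpow_def_of_ne_zero hw0, Complex.exp_re]
  have harg : Complex.arg w ≠ Real.pi := by
    intro h
    rcases Complex.arg_eq_pi_iff.mp h with ⟨h1, h2⟩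
    exact absurd (hw h2) (not_lt.mpr h1.le)
  have h1 : (Complex.log w * ((1:ℂ)/2)).im = Complex.arg w / 2 := by
    simp [Complex.mul_im, Complex.log_im, Complex.log_re]
    ring
  rw [h1]
  have h2 : |Complex.arg w / 2| < Real.pi / 2 := by
    have := Complex.neg_pi_lt_arg w
    have := Complex.arg_le_pi w
    rw [abs_lt]
    constructor <;> [linarith; · rcases lt_or_eq_of_le (Complex.arg_le_pi w) with h | h
                                 · linarith
                                 · exact absurd h harg]
  exact mul_pos (Real.exp_pos _) (Real.cos_pos_of_mem_Ioo (abs_lt.mp h2 |> fun ⟨h1',h2'⟩ => ⟨h1', h2'⟩))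

private lemma norm_cexp (z : ℂ) : ‖Complex.exp z‖ = Real.exp z.re := by
  rw [Complex.norm_exp]

set_option maxHeartbeats 1000000 in
/-- The Laplace-transformed linear Boussinesq system on `(ℓ,∞)` with boundary datum
`q̂(ℓ) = Q₀` has a unique solution with no exponential growth, given by the decaying
exponential `q̂(x) = Q₀ e^{-(s/√(1+κ²s²))(x-ℓ)}`, `ζ̂ = q̂/√(1+κ²s²)`. -/
theorem stmt10 (κ ℓ : ℝ) (hκ : 0 < κ) (s : ℂ) (hs : 0 < s.re) (Q₀ : ℂ)
    (ζ q : ℝ → ℂ)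
    (hq : ContDiff ℝ 2 q) (hζ : ContDiff ℝ 1 ζ)
    (heq1 : ∀ x ∈ Ici ℓ, s * ζ x + deriv q x = 0)
    (heq2 : ∀ x ∈ Ici ℓ, s * q x - (κ : ℂ) ^ 2 * s * deriv (deriv q) x + deriv ζ x = 0)
    (hbc : q ℓ = Q₀)
    (hgrowth : ∀ ε : ℝ, 0 < ε → ∃ C : ℝ, ∀ x ∈ Ici ℓ, ‖q x‖ ≤ C * Real.exp (ε * x)) :
    ∀ x ∈ Ici ℓ,
      q x = Q₀ * Complex.exp (-(s / (((1 : ℂ) + (κ : ℂ) ^ 2 * s ^ 2) ^ ((1 : ℂ) / 2)))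
          * ((x : ℂ) - (ℓ : ℂ))) ∧
      ζ x = q x / (((1 : ℂ) + (κ : ℂ) ^ 2 * s ^ 2) ^ ((1 : ℂ) / 2)) := by
  have hs0 : s ≠ 0 := fun h => by simp [h] at hs
  set w : ℂ := (1:ℂ) + (κ:ℂ)^2 * s^2 with hw
  have hwim : w.im = 0 → 0 < w.re := by
    intro h
    have him : w.im = 2 * κ^2 * s.re * s.im := by
      simp [hw, Complex.add_im, Complex.mul_im, Complex.mul_re, pow_two]; try ring
    have hre : w.re = 1 + κ^2 * (s.re^2 - s.im^2) := by
      simp [hw, Complex.add_re, Complex.mul_re, Complex.mul_im, pow_two]; try ring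
    have him0 : s.im = 0 := by
      rw [him] at h
      have hκ2 : κ^2 > 0 := by positivity
      rcases mul_eq_zero.mp h with h' | h'
      · rcases mul_eq_zero.mp h' with h'' | h''
        · nlinarith
        · nlinarith
      · exact h'
    rw [hre, him0]; nlinarith
  have hr_re : 0 < (w ^ ((1:ℂ)/2)).re := re_half_pow_pos hwim
  set r : ℂ := w ^ ((1:ℂ)/2) with hr
  have hr2 : r^2 = w := by
    rw [hr, one_div]
    simpa using Complex.cpow_nat_inv_pow w (n := 2) two_ne_zero
  have hr0 : r ≠ 0 := fun h => by rw [h] at hr_re; simp at hr_re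
  have hw0 : w ≠ 0 := by rw [← hr2]; exact pow_ne_zero 2 hr0
  set μ : ℂ := s / r with hμ
  have hμ0 : μ ≠ 0 := div_ne_zero hs0 hr0
  have hμ2 : μ^2 = s^2 / w := by rw [hμ, div_pow, hr2]
  have hμ2w : μ^2 * w = s^2 := by rw [hμ2]; field_simp
  have hμre : 0 < μ.re := by
    have hcd : r.re * r.im + r.im * r.re = w.im := by
      have := congrArg Complex.im hr2
      simpa [pow_two, Complex.mul_im] using this
    have him : w.im = 2 * κ^2 * s.re * s.im := by
      simp [hw, Complex.add_im, Complex.mul_im, Complex.mul_re, pow_two]; try ring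
    have hkey : 0 < s.re * r.re + s.im * r.im := by
      have h1 : r.re * r.im = κ^2 * s.re * s.im := by rw [him] at hcd; linarith
      have h2eq : r.re * (s.re * r.re + s.im * r.im) = s.re * (r.re^2 + κ^2*s.im^2) := by
        linear_combination s.im * h1
      have h4 : 0 < r.re^2 + κ^2 * s.im^2 := by nlinarith [pow_pos hr_re 2, sq_nonneg s.im]
      have h3 : 0 < r.re * (s.re * r.re + s.im * r.im) := by
        rw [h2eq]; exact mul_pos hs h4
      nlinarith
    rw [hμ, Complex.div_re]
    have hns : 0 < Complex.normSq r := by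
      rw [Complex.normSq_apply]; nlinarith [sq_nonneg r.im]
    rw [← add_div]
    positivity
  -- regularity
  have hqd : Differentiable ℝ q := hq.differentiable (by norm_num)
  have hq1 : ContDiff ℝ 1 (deriv q) := by
    have h2 : ContDiff ℝ ((1 : ℕ) + 1) q := by exact_mod_cast hq
    exact (contDiff_succ_iff_deriv.mp h2).2.2
  have hqd1 : Differentiable ℝ (deriv q) := hq1.differentiable one_ne_zero
  have hqc2 : Continuous (deriv (deriv q)) := (contDiff_one_iff_deriv.mp hq1).2
  -- ζ in terms of q
  have hζ_eq : ∀ y ∈ Ici ℓ, ζ y = -(deriv q y) / s := by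
    intro y hy
    rw [eq_div_iff hs0]
    linear_combination heq1 y hy
  -- the second order ODE on the interior
  have hODE : ∀ y ∈ Ioi ℓ, deriv (deriv q) y = μ^2 * q y := by
    intro y hy
    have hev : ζ =ᶠ[nhds y] fun z => -(deriv q z) / s := by
      filter_upwards [Ioi_mem_nhds hy] with z hz
      exact hζ_eq z (mem_Ici.mpr (le_of_lt hz))
    have hζd : deriv ζ y = -(deriv (deriv q) y) / s := by
      rw [hev.deriv_eq]
      simp [deriv_div_const]
    have hE := heq2 y (mem_Ici.mpr (le_of_lt hy))
    rw [hζd] at hE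
    apply mul_left_cancel₀ hw0
    have h5 : s * (s * q y - (κ:ℂ)^2 * s * deriv (deriv q) y + -(deriv (deriv q) y)/s) = 0 := by
      rw [hE, mul_zero]
    field_simp at h5
    linear_combination (-1 : ℂ) * h5 - q y * hμ2w
  -- extend to the closed half line by continuity
  have hODE' : ∀ y ∈ Ici ℓ, deriv (deriv q) y = μ^2 * q y := by
    have hcont : Continuous fun y => deriv (deriv q) y - μ^2 * q y :=
      hqc2.sub (continuous_const.mul hq.continuous)
    have hEq : EqOn (fun y => deriv (deriv q) y - μ^2*q y) (fun _ => (0:ℂ)) (closure (Ioi ℓ)) := by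
      apply Set.EqOn.closure (fun y hy => ?_) hcont continuous_const
      simpa [sub_eq_zero] using hODE y hy
    intro y hy
    have := hEq (by rwa [closure_Ioi])
    simpa [sub_eq_zero] using this
  -- first order reduction
  set u : ℝ → ℂ := fun y => deriv q y + μ * q y with hu
  have hud : Differentiable ℝ u := hqd1.add (hqd.const_mul μ)
  have hu' : ∀ y, deriv u y = deriv (deriv q) y + μ * deriv q y := by
    intro y
    rw [hu]
    rw [deriv_fun_add (hqd1 y) ((hqd y).const_mul μ), deriv_const_mul μ (hqd y)]
  have hf1deriv : ∀ y : ℝ, HasDerivAt (fun z : ℝ => Complex.exp (-μ * z) * u z)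
      ((-μ) * Complex.exp (-μ*y) * u y + Complex.exp (-μ*y) * deriv u y) y :=
    fun y => (hasDerivAt_cexp_real (-μ) y).mul (hud y).hasDerivAt
  have hf1const : ∀ y ∈ Ici ℓ, Complex.exp (-μ * y) * u y = Complex.exp (-μ * ℓ) * u ℓ := by
    apply const_on_Ici (fun y => (hf1deriv y).differentiableAt)
    intro y hy
    rw [(hf1deriv y).deriv, hu' y]
    have := hODE' y hy
    rw [hu]
    simp only []
    rw [this]
    ring
  have huval : ∀ y ∈ Ici ℓ, u y = u ℓ * Complex.exp (μ * (y - ℓ)) := by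
    intro y hy
    have h := hf1const y hy
    apply mul_left_cancel₀ (Complex.exp_ne_zero (-μ * y))
    rw [h, mul_comm (u ℓ) _, ← mul_assoc, ← Complex.exp_add]
    rw [show -μ * (y:ℂ) + μ * ((y:ℂ) - (ℓ:ℂ)) = -μ * (ℓ:ℂ) by ring]
  set B : ℂ := u ℓ / (2*μ) with hB
  have huB : u ℓ = 2 * μ * B := by rw [hB]; field_simp
  -- second integration
  have hf2deriv : ∀ y : ℝ, HasDerivAt
      (fun z : ℝ => Complex.exp (μ * z) * q z - (B * Complex.exp (-μ*ℓ)) * Complex.exp (2*μ*z))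
      ((μ * Complex.exp (μ*y) * q y + Complex.exp (μ*y) * deriv q y)
        - (B * Complex.exp (-μ*ℓ)) * (2*μ * Complex.exp (2*μ*y))) y := by
    intro y
    exact ((hasDerivAt_cexp_real μ y).mul (hqd y).hasDerivAt).sub
      ((hasDerivAt_cexp_real (2*μ) y).const_mul _)
  have hf2const : ∀ y ∈ Ici ℓ,
      Complex.exp (μ * y) * q y - (B * Complex.exp (-μ*ℓ)) * Complex.exp (2*μ*y)
      = Complex.exp (μ * ℓ) * q ℓ - (B * Complex.exp (-μ*ℓ)) * Complex.exp (2*μ*ℓ) := by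
    apply const_on_Ici (fun y => (hf2deriv y).differentiableAt)
    intro y hy
    rw [(hf2deriv y).deriv]
    have h1 : μ * Complex.exp (μ*y) * q y + Complex.exp (μ*y) * deriv q y
        = Complex.exp (μ*y) * u y := by rw [hu]; ring
    rw [h1, huval y hy, huB]
    have e1 : Complex.exp (μ * ((y:ℂ) - (ℓ:ℂ))) = Complex.exp (μ * (y:ℂ)) * Complex.exp (-μ * (ℓ:ℂ)) := by
      rw [← Complex.exp_add]; congr 1; ring
    have e2 : Complex.exp (2 * μ * (y:ℂ)) = Complex.exp (μ * (y:ℂ)) * Complex.exp (μ * (y:ℂ)) := by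
      rw [← Complex.exp_add]; congr 1; ring
    rw [e1, e2]
    ring
  have hrep : ∀ y ∈ Ici ℓ, q y
      = (Q₀ - B) * Complex.exp (-μ*((y:ℂ)-(ℓ:ℂ))) + B * Complex.exp (μ*((y:ℂ)-(ℓ:ℂ))) := by
    intro y hy
    have h := hf2const y hy
    apply mul_left_cancel₀ (Complex.exp_ne_zero (μ * y))
    have e1 : Complex.exp (μ * ((y:ℂ) - (ℓ:ℂ))) = Complex.exp (μ * (y:ℂ)) * Complex.exp (-μ * (ℓ:ℂ)) := by
      rw [← Complex.exp_add]; congr 1; ring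
    have e2 : Complex.exp (2 * μ * (y:ℂ)) = Complex.exp (μ * (y:ℂ)) * Complex.exp (μ * (y:ℂ)) := by
      rw [← Complex.exp_add]; congr 1; ring
    have e3 : Complex.exp (-μ * ((y:ℂ) - (ℓ:ℂ))) = Complex.exp (-μ * (y:ℂ)) * Complex.exp (μ * (ℓ:ℂ)) := by
      rw [← Complex.exp_add]; congr 1; ring
    have e4 : Complex.exp (2 * μ * (ℓ:ℂ)) = Complex.exp (μ * (ℓ:ℂ)) * Complex.exp (μ * (ℓ:ℂ)) := by
      rw [← Complex.exp_add]; congr 1; ring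
    have p1 : Complex.exp (μ * (y:ℂ)) * Complex.exp (-μ * (y:ℂ)) = 1 := by
      rw [← Complex.exp_add]; rw [show μ * (y:ℂ) + -μ * (y:ℂ) = 0 by ring]; exact Complex.exp_zero
    have p2 : Complex.exp (μ * (ℓ:ℂ)) * Complex.exp (-μ * (ℓ:ℂ)) = 1 := by
      rw [← Complex.exp_add]; rw [show μ * (ℓ:ℂ) + -μ * (ℓ:ℂ) = 0 by ring]; exact Complex.exp_zero
    rw [e2, e4, hbc] at h
    rw [e1, e3]
    linear_combination h - (Q₀ - B) * Complex.exp (μ * (ℓ:ℂ)) * p1 - B * Complex.exp (μ * (ℓ:ℂ)) * p2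
  -- growth kills the growing mode
  have hB0 : B = 0 := by
    by_contra hBne
    obtain ⟨C, hC⟩ := hgrowth (μ.re/2) (by positivity)
    have hBpos : 0 < ‖B‖ := norm_pos_iff.mpr hBne
    have ht : Filter.Tendsto (fun x:ℝ => ‖B‖ * Real.exp (-(μ.re*ℓ)) * Real.exp (μ.re/2 * x))
        Filter.atTop Filter.atTop := by
      apply Filter.Tendsto.const_mul_atTop (by positivity)
      exact Real.tendsto_exp_atTop.comp (Filter.Tendsto.const_mul_atTop (by positivity)
        Filter.tendsto_id)
    obtain ⟨x, hx1, hx2, hx3⟩ : ∃ x, ℓ ≤ x ∧ 0 ≤ x ∧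
        C + ‖Q₀ - B‖ + 1 ≤ ‖B‖ * Real.exp (-(μ.re*ℓ)) * Real.exp (μ.re/2*x) := by
      obtain ⟨x, hx⟩ := ((Filter.eventually_ge_atTop ℓ).and ((Filter.eventually_ge_atTop (0:ℝ)).and
        (ht.eventually_ge_atTop (C + ‖Q₀ - B‖ + 1)))).exists
      exact ⟨x, hx.1, hx.2.1, hx.2.2⟩
    have hq_eq := hrep x hx1
    have hre1 : (μ * ((x:ℂ) - (ℓ:ℂ))).re = μ.re * (x - ℓ) := by
      have hc : ((x:ℂ) - (ℓ:ℂ)) = ((x - ℓ : ℝ) : ℂ) := by push_cast; ring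
      rw [hc, Complex.mul_re]
      simp
    have hre2 : (-μ * ((x:ℂ) - (ℓ:ℂ))).re = -(μ.re * (x - ℓ)) := by
      have : (-μ * ((x:ℂ) - (ℓ:ℂ))) = -(μ * ((x:ℂ) - (ℓ:ℂ))) := by ring
      rw [this, Complex.neg_re, hre1]
    -- lower bound on ‖q x‖
    have hnb : ‖B * Complex.exp (μ*((x:ℂ)-(ℓ:ℂ)))‖ = ‖B‖ * Real.exp (μ.re * (x-ℓ)) := by
      rw [norm_mul, norm_cexp, hre1]
    have hna : ‖(Q₀ - B) * Complex.exp (-μ*((x:ℂ)-(ℓ:ℂ)))‖ ≤ ‖Q₀ - B‖ := by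
      rw [norm_mul, norm_cexp, hre2]
      have h1 : Real.exp (-(μ.re * (x - ℓ))) ≤ 1 := by
        rw [Real.exp_le_one_iff]
        nlinarith
      nlinarith [norm_nonneg (Q₀ - B)]
    have hlow : ‖B‖ * Real.exp (μ.re * (x-ℓ)) - ‖Q₀ - B‖ ≤ ‖q x‖ := by
      have h2 : B * Complex.exp (μ*((x:ℂ)-(ℓ:ℂ)))
          = q x - (Q₀ - B) * Complex.exp (-μ*((x:ℂ)-(ℓ:ℂ))) := by rw [hq_eq]; ring
      have h3 := norm_sub_le (q x) ((Q₀ - B) * Complex.exp (-μ*((x:ℂ)-(ℓ:ℂ))))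
      rw [← h2, hnb] at h3
      linarith
    have hup := hC x hx1
    -- combine
    have hsplit : Real.exp (μ.re * (x-ℓ))
        = Real.exp (μ.re/2 * x) * (Real.exp (-(μ.re*ℓ)) * Real.exp (μ.re/2 * x)) := by
      rw [← Real.exp_add, ← Real.exp_add]
      ring_nf
    have hE1 : (1:ℝ) ≤ Real.exp (μ.re/2 * x) := by
      rw [Real.one_le_exp_iff]
      positivity
    have hfin : C * Real.exp (μ.re/2 * x) + 1 ≤ ‖q x‖ := by
      have h4 : (C + ‖Q₀ - B‖ + 1) * Real.exp (μ.re/2 * x)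
          ≤ (‖B‖ * Real.exp (-(μ.re*ℓ)) * Real.exp (μ.re/2*x)) * Real.exp (μ.re/2 * x) := by
        apply mul_le_mul_of_nonneg_right hx3 (le_of_lt (Real.exp_pos _))
      have h5 : ‖B‖ * Real.exp (μ.re * (x-ℓ))
          = (‖B‖ * Real.exp (-(μ.re*ℓ)) * Real.exp (μ.re/2*x)) * Real.exp (μ.re/2 * x) := by
        rw [hsplit]; ring
      nlinarith [norm_nonneg (Q₀ - B), Real.exp_pos (μ.re/2 * x)]
    have : C * Real.exp (μ.re/2 * x) < ‖q x‖ := by linarith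
    exact absurd hup (not_le.mpr this)
  -- conclusion
  have huℓ0 : u ℓ = 0 := by rw [huB, hB0]; ring
  intro x hx
  constructor
  · have h := hrep x hx
    rw [hB0] at h
    simpa using h
  · rw [hζ_eq x hx]
    have hux : u x = 0 := by rw [huval x hx, huℓ0]; ring
    have hdq : deriv q x = -μ * q x := by
      have : deriv q x + μ * q x = 0 := hux
      linear_combination this
    rw [hdq, hμ]
    field_simp
end

section
/- Let κ > 0, τ > 0, ℓ > 0 with τ² > κ² + ℓ²/3, and consider Ĥ(s) = (τ²s + ℓ√(1+κ²s²))/(τ²s² + sℓ√(1+κ²s²) + 1) on ℂ₀ = {Re s > 0}. Then Ĥ belongs to the Hardy space H²(ℂ₀): it is holomorphic on ℂ₀ and sup_{α>0} ∫_ℝ |Ĥ(α + iξ)|² dξ < ∞. -/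
open MeasureTheory

/-- The transfer function of the linear dispersive Cummins equation. -/
noncomputable def Hhat (κ τ ℓ : ℝ) (s : ℂ) : ℂ :=
  ((τ : ℂ) ^ 2 * s + (ℓ : ℂ) * (((1 : ℂ) + (κ : ℂ) ^ 2 * s ^ 2) ^ ((1 : ℂ) / 2))) /
    ((τ : ℂ) ^ 2 * s ^ 2 + s * (ℓ : ℂ) * (((1 : ℂ) + (κ : ℂ) ^ 2 * s ^ 2) ^ ((1 : ℂ) / 2)) + 1)

namespace Stmt11Aux

open Complex

noncomputable def fb (κ : ℝ) (s : ℂ) : ℂ := (1 : ℂ) + (κ : ℂ) ^ 2 * s ^ 2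

noncomputable def w (κ : ℝ) (s : ℂ) : ℂ := fb κ s ^ ((1 : ℂ) / 2)

noncomputable def Nn (κ τ ℓ : ℝ) (s : ℂ) : ℂ := (τ : ℂ) ^ 2 * s + (ℓ : ℂ) * w κ s

noncomputable def Dd (κ τ ℓ : ℝ) (s : ℂ) : ℂ :=
  (τ : ℂ) ^ 2 * s ^ 2 + s * (ℓ : ℂ) * w κ s + 1

lemma Hhat_eq (κ τ ℓ : ℝ) (s : ℂ) : Hhat κ τ ℓ s = Nn κ τ ℓ s / Dd κ τ ℓ s := rfl

lemma half_eq : (1 : ℂ) / 2 = (((1 : ℝ) / 2 : ℝ) : ℂ) := by norm_num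

lemma fb_re (κ : ℝ) (s : ℂ) : (fb κ s).re = 1 + κ ^ 2 * (s.re ^ 2 - s.im ^ 2) := by
  simp only [fb, pow_two, Complex.add_re, Complex.mul_re, Complex.mul_im, Complex.one_re,
    Complex.one_im, Complex.ofReal_re, Complex.ofReal_im]
  ring

lemma fb_im (κ : ℝ) (s : ℂ) : (fb κ s).im = κ ^ 2 * (2 * s.re * s.im) := by
  simp only [fb, pow_two, Complex.add_im, Complex.mul_re, Complex.mul_im, Complex.one_re,
    Complex.one_im, Complex.ofReal_re, Complex.ofReal_im]
  ring

lemma fb_mem_slit {κ : ℝ} (hκ : 0 < κ) {s : ℂ} (hs : 0 < s.re) :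
    fb κ s ∈ Complex.slitPlane := by
  rw [Complex.mem_slitPlane_iff]
  rcases eq_or_ne s.im 0 with him | him
  · left; rw [fb_re, him]; nlinarith [sq_nonneg (κ * s.re)]
  · right; rw [fb_im]
    have : (2 : ℝ) * s.re * s.im ≠ 0 := by positivity
    positivity

lemma re_w_pos {κ : ℝ} (hκ : 0 < κ) {s : ℂ} (hs : 0 < s.re) : 0 < (w κ s).re := by
  have hslit := fb_mem_slit hκ hs
  have hne : fb κ s ≠ 0 := Complex.slitPlane_ne_zero hslit
  rw [w, half_eq, Complex.cpow_ofReal_re]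
  have harg_ne : (fb κ s).arg ≠ Real.pi := by
    rw [Ne, Complex.arg_eq_pi_iff]
    rw [Complex.mem_slitPlane_iff] at hslit
    rintro ⟨h1, h2⟩
    rcases hslit with h | h
    · linarith
    · exact h h2
  have harg_lt : (fb κ s).arg < Real.pi := lt_of_le_of_ne (Complex.arg_le_pi _) harg_ne
  have harg_gt := Complex.neg_pi_lt_arg (fb κ s)
  have hcos : 0 < Real.cos ((fb κ s).arg * (1 / 2)) := by
    apply Real.cos_pos_of_mem_Ioo
    constructor <;> [nlinarith; nlinarith]
  exact mul_pos (Real.rpow_pos_of_pos (norm_pos_iff.mpr hne) _) hcos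

lemma dd_conj_re (κ τ ℓ : ℝ) (s : ℂ) :
    (Dd κ τ ℓ s * (starRingEnd ℂ) s).re
      = Complex.normSq s * (τ ^ 2 * s.re + ℓ * (w κ s).re) + s.re := by
  have key : Dd κ τ ℓ s * (starRingEnd ℂ) s
      = ((Complex.normSq s : ℝ) : ℂ) * (((τ ^ 2 : ℝ) : ℂ) * s + ((ℓ : ℝ) : ℂ) * w κ s)
        + (starRingEnd ℂ) s := by
    rw [← Complex.mul_conj]
    simp only [Dd]
    push_cast
    ring
  rw [key, Complex.add_re, Complex.re_ofReal_mul, Complex.add_re, Complex.re_ofReal_mul,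
    Complex.re_ofReal_mul, Complex.conj_re]

lemma dd_ne {κ τ ℓ : ℝ} (hκ : 0 < κ) (hτ : 0 < τ) (hℓ : 0 < ℓ) {s : ℂ}
    (hs : 0 < s.re) : Dd κ τ ℓ s ≠ 0 := by
  intro h0
  have h1 := dd_conj_re κ τ ℓ s
  rw [h0, zero_mul] at h1
  simp only [Complex.zero_re] at h1
  have hw := re_w_pos hκ hs
  have hsne : s ≠ 0 := by intro h; rw [h] at hs; simp at hs
  have hns : 0 < Complex.normSq s := Complex.normSq_pos.2 hsne
  have hpos : 0 < Complex.normSq s * (τ ^ 2 * s.re + ℓ * (w κ s).re) + s.re := by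
    have : 0 < τ ^ 2 * s.re + ℓ * (w κ s).re := by positivity
    positivity
  linarith [h1, hpos]

lemma diffOn {κ τ ℓ : ℝ} (hκ : 0 < κ) (hτ : 0 < τ) (hℓ : 0 < ℓ) :
    DifferentiableOn ℂ (Hhat κ τ ℓ) {s : ℂ | 0 < s.re} := by
  intro s hs
  have hs' : 0 < s.re := hs
  apply DifferentiableAt.differentiableWithinAt
  have hfb : DifferentiableAt ℂ (fb κ) s := by
    unfold fb
    exact (differentiableAt_const _).add
      (((differentiableAt_fun_id).pow 2).const_mul _)
  have hw : DifferentiableAt ℂ (w κ) s := by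
    unfold w
    exact hfb.cpow (differentiableAt_const _) (fb_mem_slit hκ hs')
  have hN : DifferentiableAt ℂ (Nn κ τ ℓ) s := by
    unfold Nn
    exact ((differentiableAt_fun_id).const_mul _).add (hw.const_mul _)
  have hD : DifferentiableAt ℂ (Dd κ τ ℓ) s := by
    unfold Dd
    exact ((((differentiableAt_fun_id).pow 2).const_mul _).add
      (((differentiableAt_fun_id).mul_const _).mul hw)).add (differentiableAt_const _)
  have : DifferentiableAt ℂ (fun u => Nn κ τ ℓ u / Dd κ τ ℓ u) s :=
    hN.div hD (dd_ne hκ hτ hℓ hs')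
  exact this

lemma norm_w_le {κ : ℝ} (hκ : 0 < κ) (s : ℂ) : ‖w κ s‖ ≤ 1 + κ * ‖s‖ := by
  have h1 : ‖w κ s‖ = ‖fb κ s‖ ^ ((1 : ℝ) / 2) := by
    rw [w, half_eq, Complex.norm_cpow_real]
  have h2 : ‖fb κ s‖ ≤ (1 + κ * ‖s‖) ^ 2 := by
    have hle : ‖fb κ s‖ ≤ 1 + κ ^ 2 * ‖s‖ ^ 2 := by
      refine (norm_add_le _ _).trans ?_
      simp only [norm_one, norm_mul, norm_pow, Complex.norm_real, Real.norm_eq_abs,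
        abs_of_pos hκ]
      exact le_refl _
    nlinarith [norm_nonneg s, mul_nonneg hκ.le (norm_nonneg s)]
  calc ‖w κ s‖ = ‖fb κ s‖ ^ ((1 : ℝ) / 2) := h1
    _ ≤ ((1 + κ * ‖s‖) ^ 2) ^ ((1 : ℝ) / 2) :=
        Real.rpow_le_rpow (norm_nonneg _) h2 (by norm_num)
    _ = 1 + κ * ‖s‖ := by
        rw [← Real.rpow_natCast (1 + κ * ‖s‖) 2, ← Real.rpow_mul (by positivity)]
        norm_num

lemma norm_Nn_le {κ τ ℓ : ℝ} (hκ : 0 < κ) (hτ : 0 < τ) (hℓ : 0 < ℓ) (s : ℂ) :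
    ‖Nn κ τ ℓ s‖ ≤ τ ^ 2 * ‖s‖ + ℓ * (1 + κ * ‖s‖) := by
  refine (norm_add_le _ _).trans ?_
  have h1 : ‖(τ : ℂ) ^ 2 * s‖ = τ ^ 2 * ‖s‖ := by
    rw [norm_mul, norm_pow, Complex.norm_real, Real.norm_eq_abs, abs_of_pos hτ]
  have h2 : ‖(ℓ : ℂ) * w κ s‖ ≤ ℓ * (1 + κ * ‖s‖) := by
    rw [norm_mul, Complex.norm_real, Real.norm_eq_abs, abs_of_pos hℓ]
    exact mul_le_mul_of_nonneg_left (norm_w_le hκ s) hℓ.le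
  rw [h1]
  exact add_le_add (le_refl _) h2

lemma mapsTo_fb (κ : ℝ) :
    Set.MapsTo (fb κ) {s : ℂ | 0 ≤ s.re ∧ 0 ≤ s.im} {z : ℂ | 0 ≤ z.im} := by
  intro s hs
  simp only [Set.mem_setOf_eq] at hs ⊢
  rw [fb_im]
  have := mul_nonneg hs.1 hs.2
  nlinarith [sq_nonneg κ]

lemma contOn_w (κ : ℝ) : ContinuousOn (w κ) {s : ℂ | 0 ≤ s.re ∧ 0 ≤ s.im} := by
  intro s hs
  have hfb_c : Continuous (fb κ) := by
    unfold fb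
    fun_prop
  by_cases hcase : 0 ≤ (fb κ s).re ∨ (fb κ s).im ≠ 0
  · have := (Complex.continuousAt_cpow_const_of_re_pos hcase
      (by norm_num : (0:ℝ) < ((1:ℂ)/2).re)).comp hfb_c.continuousAt
    exact this.continuousWithinAt
  · push_neg at hcase
    obtain ⟨hre, him⟩ := hcase
    have hne : fb κ s ≠ 0 := by
      intro h; rw [h] at hre; simp at hre
    have hlog : ContinuousWithinAt Complex.log {z : ℂ | 0 ≤ z.im} (fb κ s) :=
      Complex.continuousWithinAt_log_of_re_neg_of_im_zero hre him
    have h1 : ContinuousWithinAt (fun u => Complex.log (fb κ u))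
        {s : ℂ | 0 ≤ s.re ∧ 0 ≤ s.im} s :=
      hlog.comp hfb_c.continuousWithinAt (mapsTo_fb κ)
    have hcomp : ContinuousWithinAt
        (fun u => Complex.exp (Complex.log (fb κ u) * ((1 : ℂ) / 2)))
        {s : ℂ | 0 ≤ s.re ∧ 0 ≤ s.im} s :=
      Complex.continuous_exp.continuousAt.comp_continuousWithinAt
        (h1.mul continuousWithinAt_const)
    refine hcomp.congr_of_eventuallyEq ?_ ?_
    · have hev : ∀ᶠ u in nhds s, fb κ u ≠ 0 := hfb_c.continuousAt.eventually_ne hne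
      exact eventually_nhdsWithin_of_eventually_nhds
        (hev.mono fun u hu => by rw [w, Complex.cpow_def_of_ne_zero hu])
    · rw [w, Complex.cpow_def_of_ne_zero hne]

lemma hhat_conj {κ τ ℓ : ℝ} (hκ : 0 < κ) {s : ℂ} (hs : 0 < s.re) :
    Hhat κ τ ℓ ((starRingEnd ℂ) s) = (starRingEnd ℂ) (Hhat κ τ ℓ s) := by
  have hslit := fb_mem_slit hκ hs
  have harg : (fb κ s).arg ≠ Real.pi := by
    rw [Ne, Complex.arg_eq_pi_iff]
    rw [Complex.mem_slitPlane_iff] at hslit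
    rintro ⟨h1, h2⟩
    rcases hslit with hh | hh
    · linarith
    · exact hh h2
  have hfbc : fb κ ((starRingEnd ℂ) s) = (starRingEnd ℂ) (fb κ s) := by
    simp only [fb, map_add, map_mul, map_pow, map_one, Complex.conj_ofReal]
  have hwc : w κ ((starRingEnd ℂ) s) = (starRingEnd ℂ) (w κ s) := by
    rw [w, w, hfbc, Complex.conj_cpow _ _ harg,
      Complex.conj_eq_iff_im.2 (by norm_num : ((1:ℂ)/2).im = 0)]
  rw [Hhat_eq, Hhat_eq, map_div₀]
  congr 1
  · simp only [Nn, map_add, map_mul, map_pow, Complex.conj_ofReal, hwc]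
  · simp only [Dd, map_add, map_mul, map_pow, map_one, Complex.conj_ofReal, hwc]

lemma dd_ne_axis {κ τ ℓ : ℝ} (hκ : 0 < κ) (hτ : 0 < τ) (hℓ : 0 < ℓ)
    (h : κ ^ 2 + ℓ ^ 2 / 3 < τ ^ 2) {s : ℂ} (hre : s.re = 0) (him : 0 ≤ s.im) :
    Dd κ τ ℓ s ≠ 0 := by
  set y := s.im with hy_def
  have hy : s = (y : ℂ) * Complex.I := by
    apply Complex.ext <;> simp [hre, hy_def]
  have hs2 : s ^ 2 = ((-(y ^ 2) : ℝ) : ℂ) := by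
    rw [hy]; push_cast
    rw [mul_pow, Complex.I_sq]; ring
  have hfb : fb κ s = ((1 - κ ^ 2 * y ^ 2 : ℝ) : ℂ) := by
    rw [fb, hs2]; push_cast; ring
  have hτκ : κ ^ 2 < τ ^ 2 := by nlinarith [sq_nonneg ℓ]
  rcases le_or_gt 0 (1 - κ ^ 2 * y ^ 2) with hc | hc
  · set c := (1 - κ ^ 2 * y ^ 2) ^ ((1 : ℝ) / 2) with hc_def
    have hw : w κ s = ((c : ℝ) : ℂ) := by
      rw [w, hfb, half_eq, ← Complex.ofReal_cpow hc]
    have hc0 : 0 ≤ c := Real.rpow_nonneg hc _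
    intro h0
    have hD : Dd κ τ ℓ s = ((1 - τ ^ 2 * y ^ 2 : ℝ) : ℂ) + ((ℓ * y * c : ℝ) : ℂ) * Complex.I := by
      rw [Dd, hw, hs2, hy]; push_cast; ring
    rw [hD] at h0
    have hDre : (1 : ℝ) - τ ^ 2 * y ^ 2 = 0 := by
      have := congrArg Complex.re h0
      simp only [Complex.add_re, Complex.ofReal_re, Complex.mul_re, Complex.ofReal_im,
        Complex.I_re, Complex.I_im, Complex.zero_re, mul_zero, mul_one, zero_mul,
        sub_zero, zero_sub, add_zero, zero_add, neg_zero] at this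
      linarith
    have hDim : ℓ * y * c = 0 := by
      have := congrArg Complex.im h0
      simp only [Complex.add_im, Complex.ofReal_im, Complex.mul_im, Complex.ofReal_re,
        Complex.I_re, Complex.I_im, Complex.zero_im, mul_zero, mul_one, zero_mul,
        sub_zero, zero_sub, add_zero, zero_add, neg_zero] at this
      linarith
    rcases mul_eq_zero.1 hDim with h1 | h1
    · rcases mul_eq_zero.1 h1 with h2 | h2
      · exact absurd h2 hℓ.ne'
      · rw [h2] at hDre; norm_num at hDre
    · have hbase : 1 - κ ^ 2 * y ^ 2 = 0 := by
        by_contra hne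
        have hpos : 0 < 1 - κ ^ 2 * y ^ 2 := lt_of_le_of_ne hc (Ne.symm hne)
        have := Real.rpow_pos_of_pos hpos ((1 : ℝ) / 2)
        rw [← hc_def] at this
        linarith [this, h1.ge, h1.le]
      nlinarith [sq_nonneg y]
  · have hy0 : 0 < y := by
      rcases him.lt_or_eq with hlt | heq
      · exact hlt
      · exfalso; rw [← heq] at hc; norm_num at hc
    set c := (κ ^ 2 * y ^ 2 - 1) ^ ((1 : ℝ) / 2) with hc_def
    have hc0 : 0 ≤ c := Real.rpow_nonneg (by linarith) _
    have hw : w κ s = ((c : ℝ) : ℂ) * Complex.I := by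
      rw [w, hfb, Complex.ofReal_cpow_of_nonpos (by linarith) ((1 : ℂ) / 2)]
      have e1 : (-((1 - κ ^ 2 * y ^ 2 : ℝ) : ℂ)) = ((κ ^ 2 * y ^ 2 - 1 : ℝ) : ℂ) := by
        push_cast; ring
      have e2 : ((κ ^ 2 * y ^ 2 - 1 : ℝ) : ℂ) ^ ((1 : ℂ) / 2) = ((c : ℝ) : ℂ) := by
        rw [half_eq, ← Complex.ofReal_cpow (by linarith)]
      have e3 : Complex.exp ((Real.pi : ℂ) * Complex.I * ((1 : ℂ) / 2)) = Complex.I := by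
        rw [show ((Real.pi : ℂ) * Complex.I * ((1 : ℂ) / 2))
            = ((Real.pi / 2 : ℝ) : ℂ) * Complex.I by push_cast; ring, Complex.exp_mul_I]
        push_cast
        simp
      rw [e1, e2, e3]
    intro h0
    have hD : Dd κ τ ℓ s = ((1 - τ ^ 2 * y ^ 2 - ℓ * y * c : ℝ) : ℂ) := by
      rw [Dd, hw, hs2, hy]; push_cast
      rw [show ((y:ℂ) * Complex.I * (ℓ:ℂ) * ((c:ℂ) * Complex.I))
          = (y:ℂ) * (ℓ:ℂ) * (c:ℂ) * (Complex.I ^ 2) by ring, Complex.I_sq]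
      ring
    rw [hD] at h0
    have h0' : (1 : ℝ) - τ ^ 2 * y ^ 2 - ℓ * y * c = 0 := by exact_mod_cast h0
    have h1 : 1 < κ ^ 2 * y ^ 2 := by linarith
    have h2 : 1 < τ ^ 2 * y ^ 2 := by nlinarith
    nlinarith [mul_nonneg (mul_nonneg hℓ.le hy0.le) hc0]

lemma a_pos {κ τ ℓ : ℝ} (hκ : 0 < κ) (hℓ : 0 < ℓ) (h : κ ^ 2 + ℓ ^ 2 / 3 < τ ^ 2) :
    0 < τ ^ 2 - ℓ * κ := by
  nlinarith [sq_nonneg (κ - ℓ / 2), sq_nonneg ℓ]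

lemma den_lower {κ τ ℓ : ℝ} (hκ : 0 < κ) (hτ : 0 < τ) (hℓ : 0 < ℓ)
    (h : κ ^ 2 + ℓ ^ 2 / 3 < τ ^ 2) {s : ℂ}
    (hR : max 1 (2 * (ℓ + 1) / (τ ^ 2 - ℓ * κ)) ≤ ‖s‖) :
    (τ ^ 2 - ℓ * κ) / 2 * ‖s‖ ^ 2 ≤ ‖Dd κ τ ℓ s‖ := by
  have ha : 0 < τ ^ 2 - ℓ * κ := a_pos hκ hℓ h
  set t := ‖s‖ with ht_def
  have ht1 : 1 ≤ t := le_trans (le_max_left _ _) hR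
  have ht2 : 2 * (ℓ + 1) / (τ ^ 2 - ℓ * κ) ≤ t := le_trans (le_max_right _ _) hR
  have ht2' : 2 * (ℓ + 1) ≤ (τ ^ 2 - ℓ * κ) * t := by
    rw [div_le_iff₀ ha] at ht2; linarith
  have hD : ‖(τ : ℂ) ^ 2 * s ^ 2‖ - ‖s * (ℓ : ℂ) * w κ s + 1‖ ≤ ‖Dd κ τ ℓ s‖ := by
    have h1 := norm_sub_norm_le ((τ : ℂ) ^ 2 * s ^ 2) (-(s * (ℓ : ℂ) * w κ s + 1))
    rw [sub_neg_eq_add, norm_neg] at h1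
    have h2 : (τ : ℂ) ^ 2 * s ^ 2 + (s * (ℓ : ℂ) * w κ s + 1) = Dd κ τ ℓ s := by
      rw [Dd]; ring
    rw [h2] at h1
    exact h1
  have hn1 : ‖(τ : ℂ) ^ 2 * s ^ 2‖ = τ ^ 2 * t ^ 2 := by
    rw [norm_mul, norm_pow, norm_pow, Complex.norm_real, Real.norm_eq_abs, abs_of_pos hτ]
  have hn2 : ‖s * (ℓ : ℂ) * w κ s + 1‖ ≤ t * ℓ * (1 + κ * t) + 1 := by
    refine (norm_add_le _ _).trans ?_
    have : ‖s * (ℓ : ℂ) * w κ s‖ ≤ t * ℓ * (1 + κ * t) := by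
      rw [norm_mul, norm_mul, Complex.norm_real, Real.norm_eq_abs, abs_of_pos hℓ]
      exact mul_le_mul_of_nonneg_left (norm_w_le hκ s) (by positivity)
    simpa using add_le_add this (le_refl (1 : ℝ))
  have hmain : (τ ^ 2 - ℓ * κ) / 2 * t ^ 2 ≤ τ ^ 2 * t ^ 2 - (t * ℓ * (1 + κ * t) + 1) := by
    nlinarith [mul_le_mul_of_nonneg_right ht2' (by linarith : (0:ℝ) ≤ t)]
  calc (τ ^ 2 - ℓ * κ) / 2 * t ^ 2 ≤ τ ^ 2 * t ^ 2 - (t * ℓ * (1 + κ * t) + 1) := hmain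
    _ ≤ ‖(τ : ℂ) ^ 2 * s ^ 2‖ - ‖s * (ℓ : ℂ) * w κ s + 1‖ := by rw [hn1]; linarith [hn2]
    _ ≤ ‖Dd κ τ ℓ s‖ := hD

lemma tail_bound {κ τ ℓ : ℝ} (hκ : 0 < κ) (hτ : 0 < τ) (hℓ : 0 < ℓ)
    (h : κ ^ 2 + ℓ ^ 2 / 3 < τ ^ 2) {s : ℂ} (hs : 0 < s.re)
    (hR : max 1 (2 * (ℓ + 1) / (τ ^ 2 - ℓ * κ)) ≤ ‖s‖) :
    ‖Hhat κ τ ℓ s‖ ≤ (2 * (τ ^ 2 + ℓ + ℓ * κ) / (τ ^ 2 - ℓ * κ)) / ‖s‖ := by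
  have ha := a_pos hκ hℓ h
  have ht1 : 1 ≤ ‖s‖ := le_trans (le_max_left _ _) hR
  have ht0 : (0 : ℝ) < ‖s‖ := by linarith
  have hden := den_lower hκ hτ hℓ h hR
  have hnum : ‖Nn κ τ ℓ s‖ ≤ (τ ^ 2 + ℓ + ℓ * κ) * ‖s‖ := by
    refine (norm_Nn_le hκ hτ hℓ s).trans ?_
    nlinarith [mul_nonneg hℓ.le (mul_nonneg hκ.le ht0.le)]
  rw [Hhat_eq, norm_div]
  have hdpos : (0 : ℝ) < (τ ^ 2 - ℓ * κ) / 2 * ‖s‖ ^ 2 := by positivity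
  calc ‖Nn κ τ ℓ s‖ / ‖Dd κ τ ℓ s‖
      ≤ ((τ ^ 2 + ℓ + ℓ * κ) * ‖s‖) / ((τ ^ 2 - ℓ * κ) / 2 * ‖s‖ ^ 2) :=
        div_le_div₀ (by positivity) hnum hdpos hden
    _ = (2 * (τ ^ 2 + ℓ + ℓ * κ) / (τ ^ 2 - ℓ * κ)) / ‖s‖ := by
        rw [div_eq_div_iff hdpos.ne' ht0.ne']
        field_simp

end Stmt11Aux

set_option maxHeartbeats 2000000 in
open Stmt11Aux in
/-- `Ĥ` belongs to the Hardy space `H²(ℂ₀)`: it is holomorphic on the right half-plane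
and its `L²` norms on vertical lines are uniformly bounded. -/
theorem stmt11 (κ τ ℓ : ℝ) (hκ : 0 < κ) (hτ : 0 < τ) (hℓ : 0 < ℓ)
    (h : κ ^ 2 + ℓ ^ 2 / 3 < τ ^ 2) :
    DifferentiableOn ℂ (Hhat κ τ ℓ) {s : ℂ | 0 < s.re} ∧
    ∃ M : ℝ, ∀ α : ℝ, 0 < α →
      (∫⁻ ξ : ℝ, ENNReal.ofReal (‖Hhat κ τ ℓ ((α : ℂ) + (ξ : ℂ) * Complex.I)‖ ^ 2))
        ≤ ENNReal.ofReal M := by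
  have ha := a_pos hκ hℓ h
  obtain ⟨R, hR_def⟩ : ∃ R : ℝ, R = max 1 (2 * (ℓ + 1) / (τ ^ 2 - ℓ * κ)) := ⟨_, rfl⟩
  have hR1 : 1 ≤ R := by rw [hR_def]; exact le_max_left _ _
  have hR0 : (0 : ℝ) < R := by linarith
  obtain ⟨C₁, hC₁_def⟩ : ∃ x : ℝ, x = 2 * (τ ^ 2 + ℓ + ℓ * κ) / (τ ^ 2 - ℓ * κ) := ⟨_, rfl⟩
  have hC₁0 : 0 ≤ C₁ := by rw [hC₁_def]; positivity
  -- the compact set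
  obtain ⟨K, hK_def⟩ : ∃ K : Set ℂ,
      K = Metric.closedBall (0 : ℂ) R ∩ {u : ℂ | 0 ≤ u.re ∧ 0 ≤ u.im} := ⟨_, rfl⟩
  have hclosed : IsClosed {u : ℂ | 0 ≤ u.re ∧ 0 ≤ u.im} :=
    (isClosed_le continuous_const Complex.continuous_re).inter
      (isClosed_le continuous_const Complex.continuous_im)
  have hKcomp : IsCompact K := by
    rw [hK_def]; exact (isCompact_closedBall 0 R).inter_right hclosed
  have hDcont : ContinuousOn (Dd κ τ ℓ) K := by
    have hwK : ContinuousOn (w κ) K := (contOn_w κ).mono (by rw [hK_def]; exact Set.inter_subset_right)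
    unfold Dd
    exact (((continuous_const.mul (continuous_pow 2)).continuousOn).add
      (((continuous_id.mul continuous_const).continuousOn).mul hwK)).add continuousOn_const
  have hne : ∀ u ∈ K, Dd κ τ ℓ u ≠ 0 := by
    intro u hu
    rw [hK_def] at hu
    rcases hu.2.1.lt_or_eq with hlt | heq
    · exact dd_ne hκ hτ hℓ hlt
    · exact dd_ne_axis hκ hτ hℓ h heq.symm hu.2.2
  have h0K : (0 : ℂ) ∈ K := by
    rw [hK_def]
    constructor
    · simpa [Metric.mem_closedBall] using hR0.le
    · simp [Set.mem_setOf_eq]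
  obtain ⟨s₀, hs₀K, hmin⟩ := hKcomp.exists_isMinOn ⟨0, h0K⟩ hDcont.norm
  obtain ⟨c, hc_def⟩ : ∃ x : ℝ, x = ‖Dd κ τ ℓ s₀‖ := ⟨_, rfl⟩
  have hc : 0 < c := by rw [hc_def]; exact norm_pos_iff.2 (hne s₀ hs₀K)
  obtain ⟨Cn, hCn_def⟩ : ∃ x : ℝ, x = τ ^ 2 * R + ℓ * (1 + κ * R) := ⟨_, rfl⟩
  have hCn0 : 0 ≤ Cn := by
    rw [hCn_def]; positivity
  obtain ⟨C, hC_def⟩ : ∃ x : ℝ, x = max (2 * C₁ ^ 2) ((Cn / c) ^ 2 * (1 + R ^ 2)) := ⟨_, rfl⟩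
  have hC0 : 0 ≤ C := by
    rw [hC_def]; exact le_trans (by positivity) (le_max_left _ _)
  -- key pointwise bound
  have key : ∀ α ξ : ℝ, 0 < α →
      ‖Hhat κ τ ℓ ((α : ℂ) + (ξ : ℂ) * Complex.I)‖ ^ 2 * (1 + ξ ^ 2) ≤ C := by
    intro α ξ hα
    obtain ⟨s, hs_def⟩ : ∃ s : ℂ, s = (α : ℂ) + (ξ : ℂ) * Complex.I := ⟨_, rfl⟩
    rw [← hs_def]
    have hsre : s.re = α := by simp [hs_def]
    have hsim : s.im = ξ := by simp [hs_def]
    have hs' : 0 < s.re := by rw [hsre]; exact hα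
    have hnorm2 : ‖s‖ ^ 2 = α ^ 2 + ξ ^ 2 := by
      rw [Complex.sq_norm, Complex.normSq_apply, hsre, hsim]
      ring
    rcases le_or_gt R ‖s‖ with hbig | hsmall
    · have hbig' : max 1 (2 * (ℓ + 1) / (τ ^ 2 - ℓ * κ)) ≤ ‖s‖ := by
        rw [← hR_def]; exact hbig
      have hH : ‖Hhat κ τ ℓ s‖ ≤ C₁ / ‖s‖ := by
        rw [hC₁_def]; exact tail_bound hκ hτ hℓ h hs' hbig'
      have ht1 : 1 ≤ ‖s‖ := le_trans hR1 hbig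
      have ht0 : (0 : ℝ) < ‖s‖ := by linarith
      have hHsq : ‖Hhat κ τ ℓ s‖ ^ 2 ≤ (C₁ / ‖s‖) ^ 2 :=
        pow_le_pow_left₀ (norm_nonneg _) hH 2
      have hξ2 : ξ ^ 2 ≤ ‖s‖ ^ 2 := by nlinarith [sq_nonneg α]
      have hs2 : (1 : ℝ) ≤ ‖s‖ ^ 2 := by nlinarith
      have hstep : (C₁ / ‖s‖) ^ 2 * (1 + ξ ^ 2) ≤ 2 * C₁ ^ 2 := by
        rw [div_pow, div_mul_eq_mul_div, div_le_iff₀ (pow_pos ht0 2)]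
        nlinarith [mul_le_mul_of_nonneg_left hξ2 (sq_nonneg C₁),
          mul_le_mul_of_nonneg_left hs2 (sq_nonneg C₁)]
      calc ‖Hhat κ τ ℓ s‖ ^ 2 * (1 + ξ ^ 2)
          ≤ (C₁ / ‖s‖) ^ 2 * (1 + ξ ^ 2) :=
            mul_le_mul_of_nonneg_right hHsq (by positivity)
        _ ≤ 2 * C₁ ^ 2 := hstep
        _ ≤ C := by rw [hC_def]; exact le_max_left _ _
    · have hbound : ‖Hhat κ τ ℓ s‖ ≤ Cn / c := by
        have hnumK : ∀ u : ℂ, ‖u‖ ≤ R → ‖Nn κ τ ℓ u‖ ≤ Cn := by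
          intro u hu
          refine (norm_Nn_le hκ hτ hℓ u).trans ?_
          rw [hCn_def]
          have h0u : (0 : ℝ) ≤ ‖u‖ := norm_nonneg u
          nlinarith [mul_le_mul_of_nonneg_left hu (sq_nonneg τ),
            mul_le_mul_of_nonneg_left hu (mul_nonneg hℓ.le hκ.le)]
        rcases le_or_gt 0 ξ with hξ | hξ
        · have hsK : s ∈ K := by
            rw [hK_def]
            constructor
            · simpa [Metric.mem_closedBall] using hsmall.le
            · exact ⟨by rw [hsre]; exact hα.le, by rw [hsim]; exact hξ⟩
          have hden : c ≤ ‖Dd κ τ ℓ s‖ := by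
            rw [hc_def]; exact isMinOn_iff.1 hmin s hsK
          rw [Hhat_eq, norm_div]
          exact div_le_div₀ hCn0 (hnumK s hsmall.le) hc hden
        · set s' : ℂ := (starRingEnd ℂ) s with hs'_def
          have hs'norm : ‖s'‖ = ‖s‖ := by
            rw [hs'_def, Complex.norm_conj]
          have hs'K : s' ∈ K := by
            rw [hK_def]
            constructor
            · rw [Metric.mem_closedBall, dist_zero_right, hs'norm]; exact hsmall.le
            · refine ⟨?_, ?_⟩
              · rw [hs'_def, Complex.conj_re, hsre]; exact hα.le
              · rw [hs'_def, Complex.conj_im, hsim]; linarith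
          have hden : c ≤ ‖Dd κ τ ℓ s'‖ := by
            rw [hc_def]; exact isMinOn_iff.1 hmin s' hs'K
          have hHconj : ‖Hhat κ τ ℓ s‖ = ‖Hhat κ τ ℓ s'‖ := by
            rw [hs'_def, hhat_conj hκ hs', Complex.norm_conj]
          rw [hHconj, Hhat_eq, norm_div]
          refine div_le_div₀ hCn0 (hnumK s' ?_) hc hden
          rw [hs'norm]; exact hsmall.le
      have hHsq : ‖Hhat κ τ ℓ s‖ ^ 2 ≤ (Cn / c) ^ 2 :=
        pow_le_pow_left₀ (norm_nonneg _) hbound 2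
      have hξ2 : ξ ^ 2 ≤ R ^ 2 := by
        nlinarith [sq_nonneg α, mul_self_le_mul_self (norm_nonneg s) hsmall.le]
      calc ‖Hhat κ τ ℓ s‖ ^ 2 * (1 + ξ ^ 2)
          ≤ (Cn / c) ^ 2 * (1 + R ^ 2) :=
            mul_le_mul hHsq (by linarith) (by positivity) (by positivity)
        _ ≤ C := by rw [hC_def]; exact le_max_right _ _
  refine ⟨diffOn hκ hτ hℓ, C * Real.pi, fun α hα => ?_⟩
  have hpt : ∀ ξ : ℝ, ‖Hhat κ τ ℓ ((α : ℂ) + (ξ : ℂ) * Complex.I)‖ ^ 2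
      ≤ C * (1 + ξ ^ 2)⁻¹ := by
    intro ξ
    have h1 : (0 : ℝ) < 1 + ξ ^ 2 := by positivity
    rw [← div_eq_mul_inv, le_div_iff₀ h1]
    exact key α ξ hα
  calc (∫⁻ ξ : ℝ, ENNReal.ofReal (‖Hhat κ τ ℓ ((α : ℂ) + (ξ : ℂ) * Complex.I)‖ ^ 2))
      ≤ ∫⁻ ξ : ℝ, ENNReal.ofReal (C * (1 + ξ ^ 2)⁻¹) :=
        lintegral_mono fun ξ => ENNReal.ofReal_le_ofReal (hpt ξ)
    _ = ENNReal.ofReal (∫ ξ : ℝ, C * (1 + ξ ^ 2)⁻¹) :=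
        (ofReal_integral_eq_lintegral_ofReal (integrable_inv_one_add_sq.const_mul C)
          (Filter.Eventually.of_forall fun ξ => by positivity)).symm
    _ = ENNReal.ofReal (C * Real.pi) := by
        rw [integral_const_mul, integral_univ_inv_one_add_sq]
end
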